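/- arXiv:1407.8379 — 2 statements merged into one kernel-verified Lean document; each statement's English description precedes it below -/
import Mathlib

section
/- Let μ be a finite Borel measure on ℝ, ν > 0, J > 0, S > 0, K̂(z) = -(z/J + iν + M̂(z))^{-1} with M̂(z) = ∫(λ-z)^{-1}dμ(λ), and Ŝ(z) = -(z/S + K̂(z)/S²)^{-1}. Then for each ω ≠ 0 real, limsup_{η ↓ 0} Im Ŝ(ω + iη) < ∞. -/
open MeasureTheory Complex Filter

theorem stmt_13 (μ : Measure ℝ) [IsFiniteMeasure μ] (ν J S : ℝ)
    (hν : 0 < ν) (hJ : 0 < J) (hSpos : 0 < S)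
    (Mhat Khat Shat : ℂ → ℂ)
    (hM : ∀ z : ℂ, 0 < z.im → Mhat z = ∫ lam : ℝ, ((lam : ℂ) - z)⁻¹ ∂μ)
    (hK : ∀ z : ℂ, 0 < z.im → Khat z = -(z / J + Complex.I * ν + Mhat z)⁻¹)
    (hSh : ∀ z : ℂ, 0 < z.im → Shat z = -(z / S + Khat z / (S ^ 2))⁻¹)
    (ω : ℝ) (hω : ω ≠ 0) :
    IsBoundedUnder (· ≤ ·) (nhdsWithin (0:ℝ) (Set.Ioi 0))
      (fun η : ℝ => (Shat (ω + Complex.I * η)).im) := by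
  have hω' : 0 < |ω| := abs_pos.mpr hω
  have hω2 : 0 < ω ^ 2 := by positivity
  set c : ℝ := min (|ω| / (2 * S)) (ν * ω ^ 2 / 4) with hc_def
  have hc : 0 < c := lt_min (by positivity) (by positivity)
  refine ⟨(1 / S + 1 / (ν * S ^ 2)) / c ^ 2, ?_⟩
  rw [eventually_map]
  filter_upwards [Ioo_mem_nhdsGT_of_mem (by constructor <;> norm_num : (0:ℝ) ∈ Set.Ico 0 1)]
    with η hη
  obtain ⟨hη0, hη1⟩ := hη
  set zz : ℂ := (ω : ℂ) + Complex.I * η with hzz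
  have hzim : zz.im = η := by simp [hzz]
  have hzre : zz.re = ω := by simp [hzz]
  have hzpos : 0 < zz.im := by rw [hzim]; exact hη0
  -- integrability of the Stieltjes integrand
  have hne : ∀ lam : ℝ, ((lam : ℂ) - zz) ≠ 0 := by
    intro lam h
    have h2 : ((lam : ℂ) - zz).im = 0 := by rw [h]; simp
    simp [Complex.sub_im, hzim] at h2
    exact hη0.ne' h2
  have habs_ge : ∀ lam : ℝ, η ≤ ‖(lam : ℂ) - zz‖ := by
    intro lam
    have h1 : |((lam : ℂ) - zz).im| ≤ ‖(lam : ℂ) - zz‖ :=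
      Complex.abs_im_le_norm _
    have h2 : ((lam : ℂ) - zz).im = -η := by simp [Complex.sub_im, hzim]
    rw [h2, abs_neg, abs_of_pos hη0] at h1
    exact h1
  have hInt : Integrable (fun lam : ℝ => ((lam : ℂ) - zz)⁻¹) μ := by
    apply (integrable_const (1 / η)).mono'
    · exact ((Complex.continuous_ofReal.sub continuous_const).inv₀ hne).aestronglyMeasurable
    · filter_upwards with lam
      rw [norm_inv, one_div]
      exact inv_anti₀ hη0 (habs_ge lam)
  have hMim : 0 ≤ (Mhat zz).im := by
    rw [hM zz hzpos]
    calc (0:ℝ) ≤ ∫ lam : ℝ, (((lam : ℂ) - zz)⁻¹).im ∂μ := by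
          apply integral_nonneg
          intro lam
          show (0:ℝ) ≤ (((lam : ℂ) - zz)⁻¹).im
          rw [Complex.inv_im]
          have h2 : ((lam : ℂ) - zz).im = -η := by simp [Complex.sub_im, hzim]
          rw [h2, neg_neg]
          exact div_nonneg hη0.le (Complex.normSq_nonneg _)
      _ = (∫ lam : ℝ, ((lam : ℂ) - zz)⁻¹ ∂μ).im := integral_im hInt
  -- the inner denominator D
  set D : ℂ := zz / (J : ℂ) + Complex.I * (ν : ℂ) + Mhat zz with hD_def
  have hDim_eq : D.im = η / J + ν + (Mhat zz).im := by
    simp [hD_def, Complex.add_im, Complex.div_ofReal_im, Complex.mul_im, hzim]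
  have hDim : ν ≤ D.im := by
    rw [hDim_eq]
    have hJ0 : 0 ≤ η / J := by positivity
    linarith
  have hDabs : ν ≤ ‖D‖ :=
    le_trans hDim (le_trans (le_abs_self _) (Complex.abs_im_le_norm _))
  have hDne : D ≠ 0 := by
    intro h
    rw [h] at hDabs
    simp at hDabs
    linarith
  have hKz : Khat zz = -D⁻¹ := hK zz hzpos
  have hKabs : ‖Khat zz‖ = (‖D‖)⁻¹ := by
    rw [hKz, norm_neg, norm_inv]
  have hnormSqD : 0 < Complex.normSq D := Complex.normSq_pos.mpr hDne
  have hKim : (Khat zz).im = D.im / Complex.normSq D := by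
    rw [hKz, Complex.neg_im, Complex.inv_im, neg_div, neg_neg]
  have hKim_pos : 0 < (Khat zz).im := by
    rw [hKim]
    exact div_pos (lt_of_lt_of_le hν hDim) hnormSqD
  have hKim_le : (Khat zz).im ≤ ν⁻¹ := by
    refine le_trans (le_trans (le_abs_self _) (Complex.abs_im_le_norm _)) ?_
    rw [hKabs]
    exact inv_anti₀ hν hDabs
  -- the outer denominator E
  set E : ℂ := zz / (S : ℂ) + Khat zz / ((S : ℂ) ^ 2) with hE_def
  have hS2 : ((S : ℂ) ^ 2) = ((S ^ 2 : ℝ) : ℂ) := by push_cast; ring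
  have hEim_eq : E.im = η / S + (Khat zz).im / S ^ 2 := by
    rw [hE_def, Complex.add_im, hS2, Complex.div_ofReal_im, Complex.div_ofReal_im, hzim]
  have hEre_eq : E.re = ω / S + (Khat zz).re / S ^ 2 := by
    rw [hE_def, Complex.add_re, hS2, Complex.div_ofReal_re, Complex.div_ofReal_re, hzre]
  have hEim_pos : 0 < E.im := by
    rw [hEim_eq]
    have h1 : 0 < η / S := by positivity
    have h2 : 0 < (Khat zz).im / S ^ 2 := by positivity
    linarith
  have hEne : E ≠ 0 := by
    intro h
    rw [h] at hEim_pos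
    simp at hEim_pos
  have hEim_le : E.im ≤ 1 / S + 1 / (ν * S ^ 2) := by
    rw [hEim_eq]
    have h2 : 1 / (ν * S ^ 2) = ν⁻¹ / S ^ 2 := by
      field_simp
    rw [h2]
    gcongr <;> exact hη1.le
  -- lower bound on |E|
  have hcE : c ≤ ‖E‖ := by
    rcases le_or_gt (2 / (|ω| * S)) (‖D‖) with h | h
    · -- Khat is small, real part dominates
      have hK2 : ‖Khat zz‖ ≤ |ω| * S / 2 := by
        rw [hKabs]
        have h0 : 0 < 2 / (|ω| * S) := by positivity
        calc (‖D‖)⁻¹ ≤ (2 / (|ω| * S))⁻¹ := inv_anti₀ h0 h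
          _ = |ω| * S / 2 := by field_simp
      have hre_abs : |(Khat zz).re / S ^ 2| ≤ |ω| / (2 * S) := by
        rw [abs_div, abs_of_pos (by positivity : (0:ℝ) < S ^ 2)]
        rw [div_le_div_iff₀ (by positivity) (by positivity)]
        have h3 : |(Khat zz).re| ≤ |ω| * S / 2 :=
          le_trans (Complex.abs_re_le_norm _) hK2
        nlinarith [hSpos]
      have hkey : |ω / S| - |(Khat zz).re / S ^ 2| ≤ |E.re| := by
        have := abs_sub_abs_le_abs_sub (ω / S) (-((Khat zz).re / S ^ 2))
        rw [abs_neg, sub_neg_eq_add, ← hEre_eq] at this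
        exact this
      have hωS : |ω / S| = |ω| / S := by
        rw [abs_div, abs_of_pos hSpos]
      have hre_lb : |ω| / (2 * S) ≤ |E.re| := by
        have h4 : |ω| / S - |ω| / (2 * S) = |ω| / (2 * S) := by
          field_simp
          ring
        rw [hωS] at hkey
        linarith
      calc c ≤ |ω| / (2 * S) := min_le_left _ _
        _ ≤ |E.re| := hre_lb
        _ ≤ ‖E‖ := Complex.abs_re_le_norm _
    · -- |D| small, imaginary part of Khat dominates
      have hnsq : Complex.normSq D < 4 / (ω ^ 2 * S ^ 2) := by
        rw [← Complex.sq_norm]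
        have h0 : 0 ≤ ‖D‖ := norm_nonneg _
        have h1 : ‖D‖ ^ 2 < (2 / (|ω| * S)) ^ 2 := by
          apply pow_lt_pow_left₀ h h0
          norm_num
        calc ‖D‖ ^ 2 < (2 / (|ω| * S)) ^ 2 := h1
          _ = 4 / (ω ^ 2 * S ^ 2) := by
            rw [div_pow, mul_pow, _root_.sq_abs]
            norm_num
      have hKim_lb : ν * ω ^ 2 * S ^ 2 / 4 ≤ (Khat zz).im := by
        rw [hKim]
        have h1 : ν / (4 / (ω ^ 2 * S ^ 2)) ≤ ν / Complex.normSq D := by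
          apply div_le_div_of_nonneg_left hν.le hnormSqD hnsq.le
        have h2 : ν / (4 / (ω ^ 2 * S ^ 2)) = ν * ω ^ 2 * S ^ 2 / 4 := by
          field_simp
        rw [h2] at h1
        refine le_trans h1 ?_
        gcongr
      have hEim_lb : ν * ω ^ 2 / 4 ≤ E.im := by
        rw [hEim_eq]
        have h1 : 0 ≤ η / S := by positivity
        have h2 : ν * ω ^ 2 / 4 ≤ (Khat zz).im / S ^ 2 := by
          rw [le_div_iff₀ (by positivity : (0:ℝ) < S ^ 2)]
          calc ν * ω ^ 2 / 4 * S ^ 2 = ν * ω ^ 2 * S ^ 2 / 4 := by ring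
            _ ≤ (Khat zz).im := hKim_lb
        linarith
      calc c ≤ ν * ω ^ 2 / 4 := min_le_right _ _
        _ ≤ E.im := hEim_lb
        _ ≤ |E.im| := le_abs_self _
        _ ≤ ‖E‖ := Complex.abs_im_le_norm _
  -- conclude
  have hSh' : Shat zz = -E⁻¹ := by
    rw [hSh zz hzpos]
  have hnsqE : c ^ 2 ≤ Complex.normSq E := by
    rw [← Complex.sq_norm]
    exact pow_le_pow_left₀ hc.le hcE 2
  rw [hSh', Complex.neg_im, Complex.inv_im, neg_div, neg_neg]
  exact div_le_div₀ (by positivity) hEim_le (by positivity) hnsqE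
end

section
/- Let κ be a finite Borel measure on ℝ with J = κ(ℝ) > 0 and K̂(z) = ∫ (ω-z)^{-1} dκ(ω) nonvanishing on the upper half plane, and let ν > 0. Define M̂(z) by iν + M̂(z) = -z/J - K̂(z)^{-1}. Then ν + Im M̂(z) ≥ 0 for all z in the upper half plane. -/
open MeasureTheory Complex

theorem stmt_19 (κ : Measure ℝ) [IsFiniteMeasure κ] (J : ℝ)
    (hJ : J = (κ Set.univ).toReal) (hJpos : 0 < J) (ν : ℝ) (hν : 0 < ν)
    (Khat : ℂ → ℂ)
    (hK : ∀ z : ℂ, 0 < z.im → Khat z = ∫ ω : ℝ, ((ω : ℂ) - z)⁻¹ ∂κ)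
    (hK0 : ∀ z : ℂ, 0 < z.im → Khat z ≠ 0)
    (Mhat : ℂ → ℂ)
    (hM : ∀ z : ℂ, 0 < z.im → Mhat z = -z / J - (Khat z)⁻¹ - Complex.I * ν) :
    ∀ z : ℂ, 0 < z.im → 0 ≤ ν + (Mhat z).im := by
  intro z hz
  set f : ℝ → ℂ := fun ω => ((ω : ℂ) - z)⁻¹ with hf
  have hne : ∀ ω : ℝ, ((ω : ℂ) - z) ≠ 0 := by
    intro ω h
    have h2 : ((ω : ℂ) - z).im = 0 := by rw [h]; simp
    simp [Complex.sub_im] at h2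
    linarith
  have hcont : Continuous f := by
    exact (Continuous.inv₀ (Complex.continuous_ofReal.sub continuous_const) hne)
  have hnorm : ∀ ω : ℝ, ‖f ω‖ ≤ (z.im)⁻¹ := by
    intro ω
    simp only [hf, norm_inv]
    have h1 : z.im ≤ ‖(ω : ℂ) - z‖ := by
      have := Complex.abs_im_le_norm ((ω : ℂ) - z)
      simp only [Complex.sub_im, Complex.ofReal_im, zero_sub, abs_neg] at this
      calc z.im ≤ |z.im| := le_abs_self _
        _ ≤ _ := this
    exact inv_anti₀ hz h1
  have hfInt : Integrable f κ := by
    refine ⟨hcont.aestronglyMeasurable, ?_⟩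
    exact MeasureTheory.HasFiniteIntegral.of_bounded (C := (z.im)⁻¹)
      (Filter.Eventually.of_forall hnorm)
  have hgInt : Integrable (fun ω => ‖f ω‖) κ := hfInt.norm
  have hg2Int : Integrable (fun ω => ‖f ω‖ ^ 2) κ := by
    refine ⟨((hcont.norm).pow 2).aestronglyMeasurable, ?_⟩
    refine MeasureTheory.HasFiniteIntegral.of_bounded (C := (z.im)⁻¹ ^ 2)
      (Filter.Eventually.of_forall fun ω => ?_)
    have h1 := hnorm ω
    have h0 : (0:ℝ) ≤ ‖f ω‖ := norm_nonneg _
    rw [Real.norm_eq_abs, _root_.abs_of_nonneg (by positivity)]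
    nlinarith
  set a : ℝ := ∫ ω, ‖f ω‖ ∂κ with ha
  set b : ℝ := ∫ ω, ‖f ω‖ ^ 2 ∂κ with hb
  -- Cauchy-Schwarz : a^2 ≤ J * b
  have key : a ^ 2 ≤ J * b := by
    have h0 : 0 ≤ ∫ ω, (‖f ω‖ - a / J) ^ 2 ∂κ :=
      integral_nonneg fun ω => sq_nonneg _
    have hexp : ∫ ω, (‖f ω‖ - a / J) ^ 2 ∂κ
        = b - 2 * (a / J) * a + (a / J) ^ 2 * J := by
      have : ∀ ω, (‖f ω‖ - a / J) ^ 2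
          = ‖f ω‖ ^ 2 - (2 * (a / J)) * ‖f ω‖ + (a / J) ^ 2 := by
        intro ω; ring
      simp_rw [this]
      rw [integral_add (by exact (hg2Int.sub (hgInt.const_mul _)))
            (integrable_const _),
          integral_sub hg2Int (hgInt.const_mul _),
          integral_const_mul, integral_const]
      simp only [smul_eq_mul, measureReal_def, ← hJ, ← ha, ← hb]
      ring
    rw [hexp] at h0
    have hJ0 : J ≠ 0 := ne_of_gt hJpos
    have heq : b - 2 * (a / J) * a + (a / J) ^ 2 * J = b - a ^ 2 / J := by
      field_simp
      ring
    rw [heq] at h0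
    have h3 : a ^ 2 / J ≤ b := by linarith
    have := (div_le_iff₀ hJpos).mp h3
    linarith
  -- Imaginary part of K
  have himf : ∀ ω : ℝ, (f ω).im = z.im * ‖f ω‖ ^ 2 := by
    intro ω
    have hns : Complex.normSq ((ω : ℂ) - z) ≠ 0 := by
      simpa [Complex.normSq_eq_zero] using hne ω
    simp only [hf, Complex.inv_im, norm_inv, Complex.sub_im, Complex.ofReal_im,
      zero_sub, neg_neg]
    rw [← Complex.sq_norm]
    field_simp
  have hKval : Khat z = ∫ ω, f ω ∂κ := hK z hz
  have hKim : (Khat z).im = z.im * b := by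
    have hint : (∫ ω, f ω ∂κ).im = ∫ ω, (f ω).im ∂κ := by
      have h := Complex.imCLM.integral_comp_comm hfInt
      simpa using h.symm
    rw [hKval, hint]
    simp_rw [himf]
    rw [integral_const_mul]
  have hKnorm : ‖Khat z‖ ≤ a := by
    rw [hKval]; exact norm_integral_le_integral_norm f
  have hnsK : Complex.normSq (Khat z) ≤ J * b := by
    calc Complex.normSq (Khat z) = ‖Khat z‖ ^ 2 := by
          rw [Complex.sq_norm]
      _ ≤ a ^ 2 := by nlinarith [norm_nonneg (Khat z)]
      _ ≤ J * b := key
  have hnsKpos : 0 < Complex.normSq (Khat z) :=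
    Complex.normSq_pos.mpr (hK0 z hz)
  have hbpos : 0 < b := by nlinarith
  -- Compute the imaginary part of Mhat z
  have hMim : (Mhat z).im = -z.im / J + (Khat z).im / Complex.normSq (Khat z) - ν := by
    rw [hM z hz]
    simp [Complex.sub_im, Complex.div_im, Complex.inv_im, Complex.mul_im,
      Complex.neg_im, Complex.neg_re, Complex.normSq_ofReal]
    have hJ0 : J ≠ 0 := ne_of_gt hJpos
    field_simp
    ring
  rw [hMim, hKim]
  have h1 : z.im / J ≤ z.im * b / Complex.normSq (Khat z) := by
    rw [div_le_div_iff₀ hJpos hnsKpos]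
    nlinarith
  have hrw : ν + (-z.im / J + z.im * b / Complex.normSq (Khat z) - ν)
      = z.im * b / Complex.normSq (Khat z) - z.im / J := by ring
  rw [hrw]
  linarith
end
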